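/- arXiv:2303.01751 — 4 statements merged into one kernel-verified Lean document; each statement's English description precedes it below -/
import Mathlib

section
/- Let E be a finite-dimensional real inner product space, g : ℝ → ℝ a function, and φ : ℝ × E × E → ℝ twice continuously differentiable. Suppose φ satisfies the phase-space Hamilton–Jacobi–Bellman equation: for all (t, x, v), ∂φ/∂t(t,x,v) = −(1/2)·g(t)²·‖∇_v φ(t,x,v)‖² − ⟪v, ∇_x φ(t,x,v)⟫ − (1/2)·g(t)²·Δ_v φ(t,x,v). Then the Hopf–Cole transform Ψ(t,x,v) := exp(φ(t,x,v)) satisfies, for all (t,x,v), the linear backward Kolmogorov-type equation ∂Ψ/∂t(t,x,v) = −(1/2)·g(t)²·Δ_v Ψ(t,x,v) − ⟪∇_x Ψ(t,x,v), v⟫. -/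
open scoped Gradient RealInnerProductSpace

/-- The Laplacian of `f : E → ℝ` at `x`: the trace of the second derivative, computed as the sum
of the second derivative evaluated along an orthonormal basis. -/
noncomputable def laplacian {E : Type*} [NormedAddCommGroup E] [InnerProductSpace ℝ E]
    [FiniteDimensional ℝ E] (f : E → ℝ) (x : E) : ℝ :=
  ∑ i, iteratedFDeriv ℝ 2 f x ![stdOrthonormalBasis ℝ E i, stdOrthonormalBasis ℝ E i]

lemma gradient_exp_aux {E : Type*} [NormedAddCommGroup E] [InnerProductSpace ℝ E]
    [FiniteDimensional ℝ E] (f : E → ℝ) (v : E) (hf : DifferentiableAt ℝ f v) :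
    ∇ (fun w => Real.exp (f w)) v = Real.exp (f v) • ∇ f v := by
  have h := (hf.hasFDerivAt.exp).fderiv
  unfold gradient
  rw [h, map_smul]

lemma inner_gradient_aux {E : Type*} [NormedAddCommGroup E] [InnerProductSpace ℝ E]
    [FiniteDimensional ℝ E] (f : E → ℝ) (v u : E) :
    ⟪∇ f v, u⟫ = fderiv ℝ f v u := by
  unfold gradient
  exact InnerProductSpace.toDual_symm_apply

lemma laplacian_exp_aux {E : Type*} [NormedAddCommGroup E] [InnerProductSpace ℝ E]
    [FiniteDimensional ℝ E] (f : E → ℝ) (hf : ContDiff ℝ 2 f) (v : E) :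
    laplacian (fun w => Real.exp (f w)) v
      = Real.exp (f v) * (laplacian f v + ‖∇ f v‖ ^ 2) := by
  have hfd : Differentiable ℝ f := hf.differentiable two_ne_zero
  have hD : ContDiff ℝ 1 (fderiv ℝ f) := hf.fderiv_right (by norm_num)
  have hDd : DifferentiableAt ℝ (fderiv ℝ f) v := (hD.differentiable one_ne_zero).differentiableAt
  have heq : fderiv ℝ (fun w => Real.exp (f w)) = fun w => Real.exp (f w) • fderiv ℝ f w :=
    funext fun w => ((hfd w).hasFDerivAt.exp).fderiv
  have hF : HasFDerivAt (fun w => Real.exp (f w) • fderiv ℝ f w)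
      (Real.exp (f v) • fderiv ℝ (fderiv ℝ f) v
        + (Real.exp (f v) • fderiv ℝ f v).smulRight (fderiv ℝ f v)) v :=
    HasFDerivAt.smul ((hfd v).hasFDerivAt.exp) hDd.hasFDerivAt
  have key : ∀ u : E, iteratedFDeriv ℝ 2 (fun w => Real.exp (f w)) v ![u, u]
      = Real.exp (f v) * (fderiv ℝ (fderiv ℝ f) v u u)
        + Real.exp (f v) * (fderiv ℝ f v u * fderiv ℝ f v u) := by
    intro u
    rw [iteratedFDeriv_two_apply]
    have : fderiv ℝ (fderiv ℝ fun w => Real.exp (f w)) v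
        = Real.exp (f v) • fderiv ℝ (fderiv ℝ f) v
          + (Real.exp (f v) • fderiv ℝ f v).smulRight (fderiv ℝ f v) := by
      rw [heq]; exact hF.fderiv
    rw [this]
    simp [ContinuousLinearMap.add_apply, ContinuousLinearMap.smul_apply,
      ContinuousLinearMap.smulRight_apply, smul_eq_mul]
    ring
  have hlap : laplacian f v = ∑ i, fderiv ℝ (fderiv ℝ f) v (stdOrthonormalBasis ℝ E i)
      (stdOrthonormalBasis ℝ E i) := by
    unfold laplacian
    refine Finset.sum_congr rfl fun i _ => ?_
    rw [iteratedFDeriv_two_apply]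
    simp
  have hnorm : ‖∇ f v‖ ^ 2
      = ∑ i, fderiv ℝ f v (stdOrthonormalBasis ℝ E i) * fderiv ℝ f v (stdOrthonormalBasis ℝ E i) := by
    have hpar := (stdOrthonormalBasis ℝ E).sum_inner_mul_inner (∇ f v) (∇ f v)
    calc ‖∇ f v‖ ^ 2 = ⟪∇ f v, ∇ f v⟫ := (real_inner_self_eq_norm_sq _).symm
      _ = ∑ i, ⟪∇ f v, stdOrthonormalBasis ℝ E i⟫ * ⟪stdOrthonormalBasis ℝ E i, ∇ f v⟫ :=
        hpar.symm
      _ = _ := by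
        refine Finset.sum_congr rfl fun i _ => ?_
        rw [inner_gradient_aux, real_inner_comm, inner_gradient_aux]
  rw [hlap, hnorm]
  unfold laplacian
  simp only [key]
  rw [Finset.sum_add_distrib, ← Finset.mul_sum, ← Finset.mul_sum]
  ring

/-- Hopf–Cole transform: if `φ` solves the phase-space HJB equation, then `Ψ = exp φ`
solves the linear backward Kolmogorov-type equation. -/
theorem hopf_cole_exp {E : Type*} [NormedAddCommGroup E]
    [InnerProductSpace ℝ E] [FiniteDimensional ℝ E]
    (g : ℝ → ℝ) (φ : ℝ → E → E → ℝ)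
    (hφ : ContDiff ℝ 2 fun p : ℝ × E × E => φ p.1 p.2.1 p.2.2)
    (hHJB : ∀ (t : ℝ) (x v : E),
      deriv (fun s => φ s x v) t
        = -(1/2) * g t ^ 2 * ‖∇ (fun w => φ t x w) v‖ ^ 2
          - ⟪v, ∇ (fun y => φ t y v) x⟫
          - (1/2) * g t ^ 2 * laplacian (fun w => φ t x w) v) :
    ∀ (t : ℝ) (x v : E),
      deriv (fun s => Real.exp (φ s x v)) t
        = -(1/2) * g t ^ 2 * laplacian (fun w => Real.exp (φ t x w)) v
          - ⟪∇ (fun y => Real.exp (φ t y v)) x, v⟫ := by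
  intro t x v
  have hx : ContDiff ℝ 2 (fun y => φ t y v) :=
    hφ.comp (contDiff_const.prodMk (contDiff_id.prodMk contDiff_const))
  have hw : ContDiff ℝ 2 (fun w => φ t x w) :=
    hφ.comp (contDiff_const.prodMk (contDiff_const.prodMk contDiff_id))
  have hs : ContDiff ℝ 2 (fun s => φ s x v) :=
    hφ.comp (contDiff_id.prodMk (contDiff_const.prodMk contDiff_const))
  have hderiv : deriv (fun s => Real.exp (φ s x v)) t
      = Real.exp (φ t x v) * deriv (fun s => φ s x v) t :=
    (((hs.differentiable two_ne_zero t).hasDerivAt).exp).deriv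
  have hgradx : ∇ (fun y => Real.exp (φ t y v)) x
      = Real.exp (φ t x v) • ∇ (fun y => φ t y v) x :=
    gradient_exp_aux _ _ (hx.differentiable two_ne_zero x)
  have hlap := laplacian_exp_aux (fun w => φ t x w) hw v
  rw [hderiv, hHJB t x v, hlap, hgradx, real_inner_smul_left,
    real_inner_comm (∇ (fun y => φ t y v) x) v]
  ring
end

section
/- Let E be a finite-dimensional real inner product space, g : ℝ → ℝ a function, and φ, μ : ℝ × E × E → ℝ twice continuously differentiable. Suppose φ satisfies the phase-space Hamilton–Jacobi–Bellman equation ∂φ/∂t = −(1/2)·g(t)²·‖∇_v φ‖² − ⟪v, ∇_x φ⟫ − (1/2)·g(t)²·Δ_v φ, and μ satisfies the phase-space Fokker–Planck equation ∂μ/∂t = −⟪v, ∇_x μ⟫ − g(t)²·(⟪∇_v μ, ∇_v φ⟫ + μ·Δ_v φ) + (1/2)·g(t)²·Δ_v μ (all equations holding at every (t,x,v)). Then the Hopf–Cole transform Ψ̂(t,x,v) := μ(t,x,v)·exp(−φ(t,x,v)) satisfies, for all (t,x,v), ∂Ψ̂/∂t(t,x,v) = (1/2)·g(t)²·Δ_v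 Ψ̂(t,x,v) − ⟪∇_x Ψ̂(t,x,v), v⟫. -/
open scoped Gradient RealInnerProductSpace

section Helpers

variable {E : Type*} [NormedAddCommGroup E] [InnerProductSpace ℝ E] [FiniteDimensional ℝ E]

lemma inner_gradient_eq (f : E → ℝ) (x y : E) : ⟪∇ f x, y⟫ = fderiv ℝ f x y := by
  simp [gradient, InnerProductSpace.toDual_symm_apply]

lemma hasFDerivAt_fderiv_apply (f : E → ℝ) (hf : ContDiff ℝ 2 f) (u v : E) :
    HasFDerivAt (fun w => fderiv ℝ f w u)
      ((ContinuousLinearMap.apply ℝ ℝ u).comp (fderiv ℝ (fderiv ℝ f) v)) v := by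
  have h1 : DifferentiableAt ℝ (fderiv ℝ f) v :=
    ((hf.fderiv_right (m := 1) le_rfl).differentiable (by norm_num)) v
  exact (ContinuousLinearMap.apply ℝ ℝ u).hasFDerivAt.comp v h1.hasFDerivAt

lemma fderiv_fderiv_apply (f : E → ℝ) (hf : ContDiff ℝ 2 f) (v u u' : E) :
    fderiv ℝ (fun w => fderiv ℝ f w u) v u' = fderiv ℝ (fderiv ℝ f) v u' u := by
  rw [(hasFDerivAt_fderiv_apply f hf u v).fderiv]; rfl

lemma laplacian_eq_sum (f : E → ℝ) (x : E) :
    laplacian f x = ∑ i, fderiv ℝ (fderiv ℝ f) x (stdOrthonormalBasis ℝ E i)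
      (stdOrthonormalBasis ℝ E i) := by
  unfold laplacian
  refine Finset.sum_congr rfl fun i _ => ?_
  rw [iteratedFDeriv_two_apply]
  simp

lemma fderiv2_mul_exp_neg (a b : E → ℝ) (ha : ContDiff ℝ 2 a) (hb : ContDiff ℝ 2 b)
    (v u : E) :
    fderiv ℝ (fderiv ℝ (fun w => a w * Real.exp (-b w))) v u u
      = (fderiv ℝ (fderiv ℝ a) v u u
          - 2 * (fderiv ℝ a v u * fderiv ℝ b v u)
          - a v * fderiv ℝ (fderiv ℝ b) v u u
          + a v * (fderiv ℝ b v u) ^ 2) * Real.exp (-b v) := by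
  have hda : ∀ w, DifferentiableAt ℝ a w := fun w => (ha.differentiable (by norm_num)) w
  have hdb : ∀ w, DifferentiableAt ℝ b w := fun w => (hb.differentiable (by norm_num)) w
  have hexp : ∀ w, HasFDerivAt (fun z => Real.exp (-b z))
      (Real.exp (-b w) • (-fderiv ℝ b w)) w := fun w =>
    ((hdb w).hasFDerivAt.neg).exp
  have hh : ContDiff ℝ 2 (fun w => a w * Real.exp (-b w)) :=
    ha.mul (Real.contDiff_exp.comp hb.neg)
  have hmul : ∀ w, HasFDerivAt (fun z => a z * Real.exp (-b z))
      (a w • (Real.exp (-b w) • (-fderiv ℝ b w)) + Real.exp (-b w) • fderiv ℝ a w) w :=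
    fun w => (hda w).hasFDerivAt.mul (hexp w)
  have key : (fun w => fderiv ℝ (fun z => a z * Real.exp (-b z)) w u)
      = fun w => Real.exp (-b w) * fderiv ℝ a w u
          - a w * Real.exp (-b w) * fderiv ℝ b w u := by
    funext w
    rw [(hmul w).fderiv]
    simp
    ring
  rw [← fderiv_fderiv_apply _ hh v u u, key]
  have A' := hasFDerivAt_fderiv_apply a ha u v
  have B' := hasFDerivAt_fderiv_apply b hb u v
  have T1 := (hexp v).mul A'
  have T2 := ((hda v).hasFDerivAt.mul (hexp v)).mul B'
  have T := T1.sub T2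
  rw [HasFDerivAt.fderiv (f := fun w => Real.exp (-b w) * fderiv ℝ a w u
      - a w * Real.exp (-b w) * fderiv ℝ b w u) T]
  simp [ContinuousLinearMap.apply]
  ring

lemma laplacian_mul_exp_neg (a b : E → ℝ) (ha : ContDiff ℝ 2 a) (hb : ContDiff ℝ 2 b)
    (v : E) :
    laplacian (fun w => a w * Real.exp (-b w)) v
      = (laplacian a v - 2 * ⟪∇ a v, ∇ b v⟫ - a v * laplacian b v
          + a v * ‖∇ b v‖ ^ 2) * Real.exp (-b v) := by
  have hab : ⟪∇ a v, ∇ b v⟫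
      = ∑ i, fderiv ℝ a v (stdOrthonormalBasis ℝ E i) * fderiv ℝ b v (stdOrthonormalBasis ℝ E i) := by
    rw [← (stdOrthonormalBasis ℝ E).sum_inner_mul_inner (∇ a v) (∇ b v)]
    refine Finset.sum_congr rfl fun i _ => ?_
    rw [inner_gradient_eq, real_inner_comm, inner_gradient_eq]
  have hbb : ‖∇ b v‖ ^ 2
      = ∑ i, (fderiv ℝ b v (stdOrthonormalBasis ℝ E i)) ^ 2 := by
    rw [← real_inner_self_eq_norm_sq,
      ← (stdOrthonormalBasis ℝ E).sum_inner_mul_inner (∇ b v) (∇ b v)]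
    refine Finset.sum_congr rfl fun i _ => ?_
    rw [inner_gradient_eq, real_inner_comm, inner_gradient_eq]; ring
  rw [laplacian_eq_sum, laplacian_eq_sum, laplacian_eq_sum, hab, hbb]
  rw [Finset.sum_congr rfl fun i _ => fderiv2_mul_exp_neg a b ha hb v (stdOrthonormalBasis ℝ E i)]
  rw [← Finset.sum_mul, Finset.mul_sum, Finset.mul_sum, Finset.mul_sum,
    ← Finset.sum_sub_distrib, ← Finset.sum_sub_distrib, ← Finset.sum_add_distrib]

lemma inner_gradient_mul_exp_neg (a b : E → ℝ) (ha : DifferentiableAt ℝ a x)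
    (hb : DifferentiableAt ℝ b x) (v : E) :
    ⟪∇ (fun y => a y * Real.exp (-b y)) x, v⟫
      = (⟪∇ a x, v⟫ - a x * ⟪∇ b x, v⟫) * Real.exp (-b x) := by
  have hmul : HasFDerivAt (fun z => a z * Real.exp (-b z))
      (a x • (Real.exp (-b x) • (-fderiv ℝ b x)) + Real.exp (-b x) • fderiv ℝ a x) x :=
    ha.hasFDerivAt.mul ((hb.hasFDerivAt.neg).exp)
  rw [inner_gradient_eq, hmul.fderiv, inner_gradient_eq, inner_gradient_eq]
  simp
  ring

lemma deriv_mul_exp_neg (p q : ℝ → ℝ) (hp : DifferentiableAt ℝ p t)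
    (hq : DifferentiableAt ℝ q t) :
    deriv (fun s => p s * Real.exp (-q s)) t
      = (deriv p t - p t * deriv q t) * Real.exp (-q t) := by
  have h : HasDerivAt (fun s => p s * Real.exp (-q s))
      (deriv p t * Real.exp (-q t) + p t * (Real.exp (-q t) * -(deriv q t))) t :=
    hp.hasDerivAt.mul ((hq.hasDerivAt.neg).exp)
  rw [h.deriv]; ring

end Helpers

/-- Hopf–Cole transform: if `φ` solves the phase-space HJB equation and `μ` the corresponding
Fokker–Planck equation, then `Ψ̂ = μ·exp(−φ)` solves the linear forward Kolmogorov-type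
equation. -/
theorem hopf_cole_mul_exp_neg {E : Type*} [NormedAddCommGroup E]
    [InnerProductSpace ℝ E] [FiniteDimensional ℝ E]
    (g : ℝ → ℝ) (φ μ : ℝ → E → E → ℝ)
    (hφ : ContDiff ℝ 2 fun p : ℝ × E × E => φ p.1 p.2.1 p.2.2)
    (hμ : ContDiff ℝ 2 fun p : ℝ × E × E => μ p.1 p.2.1 p.2.2)
    (hHJB : ∀ (t : ℝ) (x v : E),
      deriv (fun s => φ s x v) t
        = -(1/2) * g t ^ 2 * ‖∇ (fun w => φ t x w) v‖ ^ 2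
          - ⟪v, ∇ (fun y => φ t y v) x⟫
          - (1/2) * g t ^ 2 * laplacian (fun w => φ t x w) v)
    (hFPE : ∀ (t : ℝ) (x v : E),
      deriv (fun s => μ s x v) t
        = -⟪v, ∇ (fun y => μ t y v) x⟫
          - g t ^ 2 * (⟪∇ (fun w => μ t x w) v, ∇ (fun w => φ t x w) v⟫
              + μ t x v * laplacian (fun w => φ t x w) v)
          + (1/2) * g t ^ 2 * laplacian (fun w => μ t x w) v) :
    ∀ (t : ℝ) (x v : E),
      deriv (fun s => μ s x v * Real.exp (-φ s x v)) t
        = (1/2) * g t ^ 2 * laplacian (fun w => μ t x w * Real.exp (-φ t x w)) v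
          - ⟪∇ (fun y => μ t y v * Real.exp (-φ t y v)) x, v⟫ := by
  intro t x v
  -- section regularity
  have hφv : ContDiff ℝ 2 (fun w => φ t x w) :=
    hφ.comp (contDiff_const.prodMk (contDiff_const.prodMk contDiff_id))
  have hμv : ContDiff ℝ 2 (fun w => μ t x w) :=
    hμ.comp (contDiff_const.prodMk (contDiff_const.prodMk contDiff_id))
  have hφx : ContDiff ℝ 2 (fun y => φ t y v) :=
    hφ.comp (contDiff_const.prodMk (contDiff_id.prodMk contDiff_const))
  have hμx : ContDiff ℝ 2 (fun y => μ t y v) :=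
    hμ.comp (contDiff_const.prodMk (contDiff_id.prodMk contDiff_const))
  have hφt : ContDiff ℝ 2 (fun s => φ s x v) :=
    hφ.comp (contDiff_id.prodMk (contDiff_const (c := (x, v))))
  have hμt : ContDiff ℝ 2 (fun s => μ s x v) :=
    hμ.comp (contDiff_id.prodMk (contDiff_const (c := (x, v))))
  rw [deriv_mul_exp_neg (fun s => μ s x v) (fun s => φ s x v)
      ((hμt.differentiable (by norm_num)) t) ((hφt.differentiable (by norm_num)) t),
    laplacian_mul_exp_neg (fun w => μ t x w) (fun w => φ t x w) hμv hφv v,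
    inner_gradient_mul_exp_neg (fun y => μ t y v) (fun y => φ t y v)
      ((hμx.differentiable (by norm_num)) x) ((hφx.differentiable (by norm_num)) x) v,
    hHJB t x v, hFPE t x v, real_inner_comm (∇ (fun y => μ t y v) x) v,
    real_inner_comm (∇ (fun y => φ t y v) x) v]
  ring
end

section
/- Let E be a finite-dimensional real inner product space, g : ℝ → ℝ a function, and Ψ, Ψ̂ : ℝ × E × E → ℝ twice continuously differentiable, satisfying for all (t,x,v) the coupled linear PDEs ∂Ψ/∂t = −(1/2)·g(t)²·Δ_v Ψ − ⟪∇_x Ψ, v⟫ and ∂Ψ̂/∂t = (1/2)·g(t)²·Δ_v Ψ̂ − ⟪∇_x Ψ̂, v⟫. Then the product p(t,x,v) := Ψ(t,x,v)·Ψ̂(t,x,v) satisfies, for all (t,x,v), the Fokker–Planck-type equation ∂p/∂t = −⟪v, ∇_x p⟫ − g(t)²·(⟪∇_v Ψ̂, ∇_v Ψ⟫ + Ψ̂·Δ_v Ψ) + (1/2)·g(t)²·Δ_v p, where the middle term is the v-divergence of the vector field Ψ̂·∇_vΨ (equal to p·∇_v log Ψ when Ψ > 0). -/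
open scoped Gradient RealInnerProductSpace

section Aux

variable {E : Type*} [NormedAddCommGroup E] [InnerProductSpace ℝ E] [FiniteDimensional ℝ E]

lemma grad_inner (f : E → ℝ) (x v : E) : ⟪∇ f x, v⟫ = fderiv ℝ f x v := by
  simp [gradient, InnerProductSpace.toDual_symm_apply]

lemma laplacian_mul (f g : E → ℝ) (hf : ContDiff ℝ 2 f) (hg : ContDiff ℝ 2 g) (v : E) :
    laplacian (fun w => f w * g w) v
      = g v * laplacian f v + f v * laplacian g v + 2 * ⟪∇ f v, ∇ g v⟫ := by
  have hf1 : Differentiable ℝ f := hf.differentiable two_ne_zero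
  have hg1 : Differentiable ℝ g := hg.differentiable two_ne_zero
  have hdf : Differentiable ℝ (fderiv ℝ f) :=
    (hf.fderiv_right (m := 1) (by norm_num)).differentiable one_ne_zero
  have hdg : Differentiable ℝ (fderiv ℝ g) :=
    (hg.fderiv_right (m := 1) (by norm_num)).differentiable one_ne_zero
  have hmul : fderiv ℝ (fun w => f w * g w)
      = fun y => f y • fderiv ℝ g y + g y • fderiv ℝ f y := by
    funext y; exact fderiv_mul (hf1 y) (hg1 y)
  have H : HasFDerivAt (fun y => f y • fderiv ℝ g y + g y • fderiv ℝ f y)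
      ((f v • fderiv ℝ (fderiv ℝ g) v + (fderiv ℝ f v).smulRight (fderiv ℝ g v))
        + (g v • fderiv ℝ (fderiv ℝ f) v + (fderiv ℝ g v).smulRight (fderiv ℝ f v))) v :=
    (((hf1 v).hasFDerivAt.smul (hdg v).hasFDerivAt).add
      ((hg1 v).hasFDerivAt.smul (hdf v).hasFDerivAt))
  have h2 : fderiv ℝ (fderiv ℝ (fun w => f w * g w)) v
      = (f v • fderiv ℝ (fderiv ℝ g) v + (fderiv ℝ f v).smulRight (fderiv ℝ g v))
        + (g v • fderiv ℝ (fderiv ℝ f) v + (fderiv ℝ g v).smulRight (fderiv ℝ f v)) := by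
    rw [hmul]; exact H.fderiv
  have key : ∀ e : E, iteratedFDeriv ℝ 2 (fun w => f w * g w) v ![e, e]
      = g v * iteratedFDeriv ℝ 2 f v ![e, e] + f v * iteratedFDeriv ℝ 2 g v ![e, e]
        + 2 * (fderiv ℝ f v e * fderiv ℝ g v e) := by
    intro e
    rw [iteratedFDeriv_two_apply, iteratedFDeriv_two_apply, iteratedFDeriv_two_apply, h2]
    simp [ContinuousLinearMap.smulRight_apply, smul_eq_mul]
    ring
  have hsum : ∑ i, fderiv ℝ f v (stdOrthonormalBasis ℝ E i)
        * fderiv ℝ g v (stdOrthonormalBasis ℝ E i) = ⟪∇ f v, ∇ g v⟫ := by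
    have := (stdOrthonormalBasis ℝ E).sum_inner_mul_inner (∇ f v) (∇ g v)
    simp only [grad_inner] at this ⊢
    rw [← this]
    congr 1; funext i
    rw [real_inner_comm]
    simp [grad_inner]
  unfold laplacian
  simp only [key, Finset.sum_add_distrib, ← Finset.mul_sum]
  rw [hsum]

end Aux

/-- The factorized density `p = Ψ·Ψ̂` of the Schrödinger potentials solves the
Fokker–Planck-type equation of the optimal forward SDE. -/
theorem potentials_product_fokker_planck {E : Type*} [NormedAddCommGroup E]
    [InnerProductSpace ℝ E] [FiniteDimensional ℝ E]
    (g : ℝ → ℝ) (Ψ Ψhat : ℝ → E → E → ℝ)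
    (hΨ : ContDiff ℝ 2 fun p : ℝ × E × E => Ψ p.1 p.2.1 p.2.2)
    (hΨhat : ContDiff ℝ 2 fun p : ℝ × E × E => Ψhat p.1 p.2.1 p.2.2)
    (hPDE1 : ∀ (t : ℝ) (x v : E),
      deriv (fun s => Ψ s x v) t
        = -(1/2) * g t ^ 2 * laplacian (fun w => Ψ t x w) v
          - ⟪∇ (fun y => Ψ t y v) x, v⟫)
    (hPDE2 : ∀ (t : ℝ) (x v : E),
      deriv (fun s => Ψhat s x v) t
        = (1/2) * g t ^ 2 * laplacian (fun w => Ψhat t x w) v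
          - ⟪∇ (fun y => Ψhat t y v) x, v⟫) :
    ∀ (t : ℝ) (x v : E),
      deriv (fun s => Ψ s x v * Ψhat s x v) t
        = -⟪v, ∇ (fun y => Ψ t y v * Ψhat t y v) x⟫
          - g t ^ 2 * (⟪∇ (fun w => Ψhat t x w) v, ∇ (fun w => Ψ t x w) v⟫
              + Ψhat t x v * laplacian (fun w => Ψ t x w) v)
          + (1/2) * g t ^ 2 * laplacian (fun w => Ψ t x w * Ψhat t x w) v := by
  intro t x v
  -- slice regularity
  have sliceT : ∀ (F : ℝ → E → E → ℝ), ContDiff ℝ 2 (fun p : ℝ × E × E => F p.1 p.2.1 p.2.2) →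
      ContDiff ℝ 2 (fun s => F s x v) := fun F hF => by
    exact hF.comp (contDiff_id.prodMk (contDiff_const (c := (x, v))))
  have sliceX : ∀ (F : ℝ → E → E → ℝ), ContDiff ℝ 2 (fun p : ℝ × E × E => F p.1 p.2.1 p.2.2) →
      ContDiff ℝ 2 (fun y => F t y v) := fun F hF => by
    exact hF.comp ((contDiff_const (c := t)).prodMk (contDiff_id.prodMk (contDiff_const (c := v))))
  have sliceV : ∀ (F : ℝ → E → E → ℝ), ContDiff ℝ 2 (fun p : ℝ × E × E => F p.1 p.2.1 p.2.2) →
      ContDiff ℝ 2 (fun w => F t x w) := fun F hF => by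
    exact hF.comp ((contDiff_const (c := t)).prodMk ((contDiff_const (c := x)).prodMk contDiff_id))
  have hAx : DifferentiableAt ℝ (fun y => Ψ t y v) x :=
    ((sliceX Ψ hΨ).differentiable two_ne_zero) x
  have hBx : DifferentiableAt ℝ (fun y => Ψhat t y v) x :=
    ((sliceX Ψhat hΨhat).differentiable two_ne_zero) x
  have hAt : DifferentiableAt ℝ (fun s => Ψ s x v) t :=
    ((sliceT Ψ hΨ).differentiable two_ne_zero) t
  have hBt : DifferentiableAt ℝ (fun s => Ψhat s x v) t :=
    ((sliceT Ψhat hΨhat).differentiable two_ne_zero) t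
  have hdt : deriv (fun s => Ψ s x v * Ψhat s x v) t
      = deriv (fun s => Ψ s x v) t * Ψhat t x v + Ψ t x v * deriv (fun s => Ψhat s x v) t :=
    deriv_mul hAt hBt
  have hgradx : ⟪v, ∇ (fun y => Ψ t y v * Ψhat t y v) x⟫
      = Ψ t x v * fderiv ℝ (fun y => Ψhat t y v) x v
        + Ψhat t x v * fderiv ℝ (fun y => Ψ t y v) x v := by
    rw [real_inner_comm, grad_inner, fderiv_fun_mul hAx hBx]
    simp
  rw [hdt, hPDE1, hPDE2, hgradx,
    laplacian_mul (fun w => Ψ t x w) (fun w => Ψhat t x w) (sliceV Ψ hΨ) (sliceV Ψhat hΨhat),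
    grad_inner (fun y => Ψ t y v) x v, grad_inner (fun y => Ψhat t y v) x v,
    real_inner_comm (∇ (fun w => Ψhat t x w) v)]
  ring
end

section
/- Let E be a finite-dimensional real inner product space, g : ℝ → ℝ a function, and Ψ : ℝ × E × E → ℝ twice continuously differentiable with Ψ(t,x,v) > 0 for all (t,x,v), satisfying the PDE ∂Ψ/∂t = −(1/2)·g(t)²·Δ_v Ψ − ⟪∇_x Ψ, v⟫ at every (t,x,v). Then y := log ∘ Ψ satisfies, for all (t,x,v), ∂y/∂t(t,x,v) = −⟪v, ∇_x y(t,x,v)⟫ − (1/2)·g(t)²·(Δ_v y(t,x,v) + ‖∇_v y(t,x,v)‖²). -/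
open scoped Gradient RealInnerProductSpace
set_option linter.unusedSectionVars false

section Aux

variable {E : Type*} [NormedAddCommGroup E] [InnerProductSpace ℝ E] [FiniteDimensional ℝ E]

lemma gradient_log_comp (f : E → ℝ) (hf : Differentiable ℝ f) (hpos : ∀ w, 0 < f w) (x : E) :
    ∇ (fun w => Real.log (f w)) x = (f x)⁻¹ • ∇ f x := by
  have h2 : HasFDerivAt (fun w => Real.log (f w)) ((f x)⁻¹ • fderiv ℝ f x) x :=
    (hf x).hasFDerivAt.log (ne_of_gt (hpos x))
  have h3 : fderiv ℝ f x = (InnerProductSpace.toDual ℝ E) (∇ f x) :=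
    ((hf x).hasGradientAt.hasFDerivAt).fderiv
  have hg : HasGradientAt (fun w => Real.log (f w)) ((f x)⁻¹ • ∇ f x) x := by
    rw [hasGradientAt_iff_hasFDerivAt, map_smul, ← h3]
    exact h2
  exact hg.gradient

lemma fderiv_eq_inner_gradient (f : E → ℝ) (x : E) (hf : DifferentiableAt ℝ f x) (u : E) :
    fderiv ℝ f x u = ⟪∇ f x, u⟫ := by
  rw [(hf.hasGradientAt.hasFDerivAt).fderiv]
  rfl

lemma second_deriv_log_comp (f : E → ℝ) (hf : ContDiff ℝ 2 f) (hpos : ∀ w, 0 < f w)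
    (x u : E) :
    fderiv ℝ (fderiv ℝ (fun w => Real.log (f w))) x u u
      = (f x)⁻¹ * fderiv ℝ (fderiv ℝ f) x u u
        - ((f x) ^ 2)⁻¹ * (fderiv ℝ f x u) ^ 2 := by
  have hdf : Differentiable ℝ f := hf.differentiable (by norm_num)
  have hne : ∀ w, f w ≠ 0 := fun w => ne_of_gt (hpos w)
  have hlogfd : ∀ w, fderiv ℝ (fun z => Real.log (f z)) w = (f w)⁻¹ • fderiv ℝ f w := by
    intro w
    exact ((hdf w).hasFDerivAt.log (hne w)).fderiv
  have hEq : (fderiv ℝ (fun z => Real.log (f z)))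
      = fun w => (f w)⁻¹ • fderiv ℝ f w := funext hlogfd
  rw [hEq]
  have hinv : DifferentiableAt ℝ (fun w => (f w)⁻¹) x := ((hdf x).inv (hne x))
  have hfd2 : Differentiable ℝ (fderiv ℝ f) :=
    (hf.fderiv_right (m := 1) le_rfl).differentiable (by norm_num)
  rw [fderiv_fun_smul hinv (hfd2 x)]
  have hinv' : HasFDerivAt (fun w => (f w)⁻¹) ((-(f x ^ 2)⁻¹) • fderiv ℝ f x) x :=
    (hasDerivAt_inv (hne x)).comp_hasFDerivAt x (hdf x).hasFDerivAt
  rw [hinv'.fderiv]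
  simp only [ContinuousLinearMap.add_apply, ContinuousLinearMap.smul_apply,
    ContinuousLinearMap.smulRight_apply, ContinuousLinearMap.neg_apply, smul_eq_mul]
  ring

lemma laplacian_log_comp (f : E → ℝ) (hf : ContDiff ℝ 2 f) (hpos : ∀ w, 0 < f w) (x : E) :
    laplacian (fun w => Real.log (f w)) x
      = (f x)⁻¹ * laplacian f x - ((f x) ^ 2)⁻¹ * ‖∇ f x‖ ^ 2 := by
  have hdf : Differentiable ℝ f := hf.differentiable (by norm_num)
  have hnorm : ∑ i, (fderiv ℝ f x (stdOrthonormalBasis ℝ E i)) ^ 2 = ‖∇ f x‖ ^ 2 := by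
    have := (stdOrthonormalBasis ℝ E).sum_inner_mul_inner (∇ f x) (∇ f x)
    rw [real_inner_self_eq_norm_sq] at this
    rw [← this]
    refine Finset.sum_congr rfl fun i _ => ?_
    rw [fderiv_eq_inner_gradient f x (hdf x)]
    rw [real_inner_comm (∇ f x) (stdOrthonormalBasis ℝ E i)]
    ring
  unfold laplacian
  have key : ∀ i, iteratedFDeriv ℝ 2 (fun w => Real.log (f w)) x
      ![stdOrthonormalBasis ℝ E i, stdOrthonormalBasis ℝ E i]
      = (f x)⁻¹ * iteratedFDeriv ℝ 2 f x ![stdOrthonormalBasis ℝ E i, stdOrthonormalBasis ℝ E i]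
        - ((f x) ^ 2)⁻¹ * (fderiv ℝ f x (stdOrthonormalBasis ℝ E i)) ^ 2 := by
    intro i
    rw [iteratedFDeriv_two_apply, iteratedFDeriv_two_apply]
    simp only [Matrix.cons_val_zero, Matrix.cons_val_one, Matrix.head_cons]
    exact second_deriv_log_comp f hf hpos x _
  simp only [key]
  rw [Finset.sum_sub_distrib, ← Finset.mul_sum, ← Finset.mul_sum, hnorm]

end Aux

/-- The forward log-potential `y = log Ψ` solves the phase-space HJB-type equation. -/
theorem log_potential_forward_pde {E : Type*} [NormedAddCommGroup E]
    [InnerProductSpace ℝ E] [FiniteDimensional ℝ E]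
    (g : ℝ → ℝ) (Ψ : ℝ → E → E → ℝ)
    (hΨ : ContDiff ℝ 2 fun p : ℝ × E × E => Ψ p.1 p.2.1 p.2.2)
    (hΨpos : ∀ (t : ℝ) (x v : E), 0 < Ψ t x v)
    (hPDE : ∀ (t : ℝ) (x v : E),
      deriv (fun s => Ψ s x v) t
        = -(1/2) * g t ^ 2 * laplacian (fun w => Ψ t x w) v
          - ⟪∇ (fun y => Ψ t y v) x, v⟫) :
    ∀ (t : ℝ) (x v : E),
      deriv (fun s => Real.log (Ψ s x v)) t
        = -⟪v, ∇ (fun y => Real.log (Ψ t y v)) x⟫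
          - (1/2) * g t ^ 2 * (laplacian (fun w => Real.log (Ψ t x w)) v
              + ‖∇ (fun w => Real.log (Ψ t x w)) v‖ ^ 2) := by
  intro t x v
  have hA : 0 < Ψ t x v := hΨpos t x v
  -- partial regularity
  have hT : ContDiff ℝ 2 (fun s : ℝ => Ψ s x v) := by
    have : ContDiff ℝ 2 (fun s : ℝ => (s, x, v)) :=
      contDiff_id.prodMk (contDiff_const.prodMk contDiff_const)
    exact hΨ.comp this
  have hX : ContDiff ℝ 2 (fun y : E => Ψ t y v) := by
    have : ContDiff ℝ 2 (fun y : E => ((t : ℝ), y, v)) :=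
      contDiff_const.prodMk (contDiff_id.prodMk contDiff_const)
    exact hΨ.comp this
  have hV : ContDiff ℝ 2 (fun w : E => Ψ t x w) := by
    have : ContDiff ℝ 2 (fun w : E => ((t : ℝ), x, w)) :=
      contDiff_const.prodMk (contDiff_const.prodMk contDiff_id)
    exact hΨ.comp this
  have hTd : Differentiable ℝ (fun s : ℝ => Ψ s x v) := hT.differentiable (by norm_num)
  have hXd : Differentiable ℝ (fun y : E => Ψ t y v) := hX.differentiable (by norm_num)
  have hVd : Differentiable ℝ (fun w : E => Ψ t x w) := hV.differentiable (by norm_num)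
  -- time derivative of log
  have hderiv : deriv (fun s => Real.log (Ψ s x v)) t
      = deriv (fun s => Ψ s x v) t / Ψ t x v := by
    have h1 : HasDerivAt (fun s => Ψ s x v) (deriv (fun s => Ψ s x v) t) t :=
      (hTd t).hasDerivAt
    exact (h1.log (ne_of_gt hA)).deriv
  -- gradients of log
  have hgx : ∇ (fun y => Real.log (Ψ t y v)) x = (Ψ t x v)⁻¹ • ∇ (fun y => Ψ t y v) x :=
    gradient_log_comp _ hXd (fun w => hΨpos t w v) x
  have hgv : ∇ (fun w => Real.log (Ψ t x w)) v = (Ψ t x v)⁻¹ • ∇ (fun w => Ψ t x w) v :=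
    gradient_log_comp _ hVd (fun w => hΨpos t x w) v
  have hlap : laplacian (fun w => Real.log (Ψ t x w)) v
      = (Ψ t x v)⁻¹ * laplacian (fun w => Ψ t x w) v
        - ((Ψ t x v) ^ 2)⁻¹ * ‖∇ (fun w => Ψ t x w) v‖ ^ 2 :=
    laplacian_log_comp _ hV (fun w => hΨpos t x w) v
  rw [hderiv, hPDE t x v, hgx, hgv, hlap]
  rw [inner_smul_right, norm_smul, real_inner_comm]
  have h2 : ‖(Ψ t x v)⁻¹‖ = (Ψ t x v)⁻¹ := by
    rw [Real.norm_eq_abs, abs_of_pos (by positivity)]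
  rw [h2, mul_pow]
  have hne : Ψ t x v ≠ 0 := ne_of_gt hA
  field_simp
  ring
end
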